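/- For a finite irreducible Markov chain, the function d_G(t) = max_x ‖P_x(X_{Z_t} ∈ ·) − π‖ is non-increasing in t, where Z_t is a geometric random variable of mean t independent of the chain. -/

import Mathlib

open scoped BigOperators ENNReal NNReal

noncomputable section

/-- Total variation distance between two distributions on a finite set,
as half the `ℓ¹` distance. -/
def tv {S : Type*} [Fintype S] (μ ν : S → ℝ) : ℝ := (1 / 2) * ∑ y, |μ y - ν y|

/-- Law of the chain with transition matrix `P` started at `x`, evaluated at an
independent random time with distribution `T` on ℕ. -/
def lawAt {S : Type*} [Fintype S] [DecidableEq S] (P : Matrix S S ℝ) (T : ℕ → ℝ)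
    (x : S) : S → ℝ :=
  fun y => ∑' n, T n * (P ^ n) x y

/-- The geometric distribution on `{1,2,...}` with mean `t` (success probability `1/t`). -/
def geo (t : ℕ) : ℕ → ℝ :=
  fun n => if n = 0 then 0 else (1 / (t : ℝ)) * (1 - 1 / (t : ℝ)) ^ (n - 1)

/-! ### Auxiliary machinery -/

set_option linter.unusedSectionVars false

/-- Geometric coefficients with success probability `p`. -/
def coef (p : ℝ) : ℕ → ℝ := fun n => if n = 0 then 0 else p * (1-p)^(n-1)

lemma coef_zero (p : ℝ) : coef p 0 = 0 := rfl
lemma coef_succ (p : ℝ) (n : ℕ) : coef p (n+1) = p * (1-p)^n := by simp [coef]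

lemma coef_nonneg {p : ℝ} (hp : 0 < p) (hp1 : p ≤ 1) (n : ℕ) : 0 ≤ coef p n := by
  unfold coef; split
  · exact le_rfl
  · exact mul_nonneg hp.le (pow_nonneg (by linarith) _)

lemma summable_coef {p : ℝ} (hp : 0 < p) (hp1 : p ≤ 1) : Summable (coef p) := by
  rw [← summable_nat_add_iff 1]
  simp only [coef_succ]
  exact (summable_geometric_of_lt_one (by linarith) (by linarith)).mul_left p

lemma tsum_coef {p : ℝ} (hp : 0 < p) (hp1 : p ≤ 1) : ∑' n, coef p n = 1 := by
  rw [Summable.tsum_eq_zero_add (summable_coef hp hp1)]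
  simp only [coef_zero, coef_succ, zero_add]
  rw [tsum_mul_left, tsum_geometric_of_lt_one (by linarith) (by linarith)]
  rw [sub_sub_cancel, mul_inv_cancel₀ hp.ne']

section RingLemmas
variable {R : Type*} [NormedRing R] [NormOneClass R] [NormedAlgebra ℝ R] [CompleteSpace R]

lemma norm_coef_smul_le {p : ℝ} (hp : 0 < p) (hp1 : p ≤ 1) {M : R} (hM : ‖M‖ ≤ 1) (n : ℕ) :
    ‖coef p n • M ^ n‖ ≤ coef p n := by
  rcases n with _ | m
  · simp [coef_zero]
  · rw [norm_smul, Real.norm_eq_abs, abs_of_nonneg (coef_nonneg hp hp1 _)]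
    have h1 : ‖M ^ (m+1)‖ ≤ ‖M‖ ^ (m+1) := norm_pow_le' M m.succ_pos
    have h2 : ‖M‖ ^ (m+1) ≤ 1 := pow_le_one₀ (norm_nonneg M) hM
    nlinarith [coef_nonneg hp hp1 (m+1), norm_nonneg (M ^ (m+1))]

lemma summable_coef_smul {p : ℝ} (hp : 0 < p) (hp1 : p ≤ 1) {M : R} (hM : ‖M‖ ≤ 1) :
    Summable (fun n => coef p n • M ^ n) :=
  Summable.of_norm_bounded (summable_coef hp hp1) (norm_coef_smul_le hp hp1 hM)

lemma norm_gser_le_one {p : ℝ} (hp : 0 < p) (hp1 : p ≤ 1) {M : R} (hM : ‖M‖ ≤ 1) :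
    ‖∑' n, coef p n • M ^ n‖ ≤ 1 := by
  calc ‖∑' n, coef p n • M ^ n‖ ≤ ∑' n, ‖coef p n • M ^ n‖ :=
        norm_tsum_le_tsum_norm (Summable.of_nonneg_of_le (fun _ => norm_nonneg _)
          (norm_coef_smul_le hp hp1 hM) (summable_coef hp hp1))
    _ ≤ ∑' n, coef p n := Summable.tsum_le_tsum (norm_coef_smul_le hp hp1 hM)
        (Summable.of_nonneg_of_le (fun _ => norm_nonneg _) (norm_coef_smul_le hp hp1 hM)
          (summable_coef hp hp1)) (summable_coef hp hp1)
    _ = 1 := tsum_coef hp hp1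

lemma gser_fixed {p : ℝ} (hp : 0 < p) (hp1 : p ≤ 1) {M : R} (hM : ‖M‖ ≤ 1) :
    (∑' n, coef p n • M ^ n) = p • M + ((1-p) • M) * (∑' n, coef p n • M ^ n) := by
  have hsum := summable_coef_smul hp hp1 hM (p := p)
  have hshift : Summable (fun n => coef p (n+1) • M ^ (n+1)) :=
    (summable_nat_add_iff 1).mpr hsum
  have h1 : (∑' n, coef p n • M ^ n) = ∑' n, coef p (n+1) • M ^ (n+1) := by
    rw [Summable.tsum_eq_zero_add hsum]; simp [coef_zero]
  have key : ∀ n, coef p (n+1+1) • M ^ (n+1+1) = ((1-p) • M) * (coef p (n+1) • M ^ (n+1)) := by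
    intro n
    rw [smul_mul_assoc, mul_smul_comm, smul_smul, pow_succ']
    congr 1
    simp [coef_succ]; ring
  calc (∑' n, coef p n • M ^ n)
      = coef p (0+1) • M ^ (0+1) + ∑' n, coef p (n+1+1) • M ^ (n+1+1) := by
        rw [h1, Summable.tsum_eq_zero_add hshift]
    _ = p • M + ∑' n, ((1-p) • M) * (coef p (n+1) • M ^ (n+1)) := by
        congr 1
        · simp [coef_succ]
        · exact tsum_congr key
    _ = p • M + ((1-p) • M) * (∑' n, coef p (n+1) • M ^ (n+1)) := by
        rw [hshift.tsum_mul_left]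
    _ = _ := by rw [← h1]

lemma fixed_unique {C D X Y : R} (hC : ‖C‖ < 1) (hX : X = D + C * X) (hY : Y = D + C * Y) :
    X = Y := by
  have h : X - Y = C * (X - Y) := by
    rw [mul_sub]
    conv_lhs => rw [hX, hY]
    abel
  have hn : ‖X - Y‖ ≤ ‖C‖ * ‖X - Y‖ := by
    conv_lhs => rw [h]
    exact norm_mul_le _ _
  have h0 : ‖X - Y‖ = 0 := by nlinarith [norm_nonneg (X - Y)]
  exact sub_eq_zero.mp (norm_eq_zero.mp h0)
end RingLemmas

attribute [local instance] Matrix.linftyOpNormedAddCommGroup Matrix.linftyOpNormedRing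
  Matrix.linftyOpNormedSpace Matrix.linftyOpNormedAlgebra

section MatrixLemmas
variable {S : Type*} [Fintype S] [DecidableEq S] [Nonempty S]

lemma norm_le_one_of_rows (M : Matrix S S ℝ) (h : ∀ x, ∑ y, |M x y| ≤ 1) : ‖M‖ ≤ 1 := by
  rw [Matrix.linfty_opNorm_def]
  have : (Finset.univ.sup fun i => ∑ j, ‖M i j‖₊) ≤ 1 := by
    apply Finset.sup_le
    intro i _
    have hi := h i
    have : ((∑ j, ‖M i j‖₊ : ℝ≥0) : ℝ) ≤ ((1 : ℝ≥0) : ℝ) := by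
      push_cast
      simpa [Real.norm_eq_abs] using hi
    exact_mod_cast this
  exact_mod_cast this

/-- Entry evaluation as a continuous linear map. -/
def entryCLM (x y : S) : Matrix S S ℝ →L[ℝ] ℝ :=
  LinearMap.toContinuousLinearMap
    { toFun := fun M => M x y, map_add' := fun _ _ => rfl, map_smul' := fun _ _ => rfl }

lemma entry_tsum {f : ℕ → Matrix S S ℝ} (hf : Summable f) (x y : S) :
    (∑' n, f n) x y = ∑' n, (f n) x y :=
  (entryCLM x y).map_tsum hf

lemma pow_nonneg_entries {P : Matrix S S ℝ} (hP0 : ∀ x y, 0 ≤ P x y) (n : ℕ) :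
    ∀ x y, 0 ≤ (P ^ n) x y := by
  induction n with
  | zero => intro x y; by_cases h : x = y <;> simp [Matrix.one_apply, h]
  | succ n ih =>
    intro x y
    rw [pow_succ, Matrix.mul_apply]
    exact Finset.sum_nonneg fun z _ => mul_nonneg (ih x z) (hP0 z y)

lemma pow_row_sum {P : Matrix S S ℝ} (hP1 : ∀ x, ∑ y, P x y = 1) (n : ℕ) :
    ∀ x, ∑ y, (P ^ n) x y = 1 := by
  induction n with
  | zero => intro x; simp [Matrix.one_apply]
  | succ n ih =>
    intro x
    simp only [pow_succ, Matrix.mul_apply]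
    rw [Finset.sum_comm]
    simp only [← Finset.mul_sum, hP1, mul_one]
    exact ih x

lemma pow_entry_le_one {P : Matrix S S ℝ} (hP0 : ∀ x y, 0 ≤ P x y)
    (hP1 : ∀ x, ∑ y, P x y = 1) (n : ℕ) (x y : S) : (P ^ n) x y ≤ 1 := by
  have h1 := pow_row_sum hP1 n x
  have h2 : (P ^ n) x y ≤ ∑ z, (P ^ n) x z :=
    Finset.single_le_sum (f := fun z => (P ^ n) x z)
      (fun z _ => pow_nonneg_entries hP0 n x z) (Finset.mem_univ y)
  linarith

lemma pow_pi_inv {P : Matrix S S ℝ} {π : S → ℝ} (hπP : ∀ y, ∑ x, π x * P x y = π y) (n : ℕ) :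
    ∀ y, ∑ x, π x * (P ^ n) x y = π y := by
  induction n with
  | zero => intro y; simp [Matrix.one_apply]
  | succ n ih =>
    intro y
    simp only [pow_succ, Matrix.mul_apply, Finset.mul_sum]
    rw [Finset.sum_comm]
    calc ∑ z, ∑ x, π x * ((P ^ n) x z * P z y)
        = ∑ z, (∑ x, π x * (P ^ n) x z) * P z y := by
          congr 1; funext z; rw [Finset.sum_mul]; congr 1; funext x; ring
      _ = ∑ z, π z * P z y := by simp only [ih]
      _ = π y := hπP y

lemma stoch_norm_le_one {P : Matrix S S ℝ} (hP0 : ∀ x y, 0 ≤ P x y)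
    (hP1 : ∀ x, ∑ y, P x y = 1) : ‖P‖ ≤ 1 := by
  apply norm_le_one_of_rows
  intro x
  calc ∑ y, |P x y| = ∑ y, P x y := by
        congr 1; funext y; exact abs_of_nonneg (hP0 x y)
    _ = 1 := hP1 x
    _ ≤ 1 := le_rfl

lemma tv_nonneg {μ ν : S → ℝ} : 0 ≤ tv μ ν := by
  unfold tv
  have : (0:ℝ) ≤ ∑ y, |μ y - ν y| := Finset.sum_nonneg fun y _ => abs_nonneg _
  linarith

lemma tv_contract (G : Matrix S S ℝ) (hG0 : ∀ x y, 0 ≤ G x y) (hG1 : ∀ x, ∑ y, G x y = 1)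
    (μ ν : S → ℝ) :
    tv (fun y => ∑ z, μ z * G z y) (fun y => ∑ z, ν z * G z y) ≤ tv μ ν := by
  unfold tv
  have hbd : ∀ y, |(∑ z, μ z * G z y) - ∑ z, ν z * G z y| ≤ ∑ z, |μ z - ν z| * G z y := by
    intro y
    rw [← Finset.sum_sub_distrib]
    refine (Finset.abs_sum_le_sum_abs _ _).trans ?_
    apply Finset.sum_le_sum; intro z _
    rw [← sub_mul, abs_mul, abs_of_nonneg (hG0 z y)]
  have h1 : ∑ y, |(∑ z, μ z * G z y) - ∑ z, ν z * G z y| ≤ ∑ z, |μ z - ν z| := by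
    calc ∑ y, |(∑ z, μ z * G z y) - ∑ z, ν z * G z y|
        ≤ ∑ y, ∑ z, |μ z - ν z| * G z y := Finset.sum_le_sum fun y _ => hbd y
      _ = ∑ z, |μ z - ν z| * (∑ y, G z y) := by
          rw [Finset.sum_comm]; simp only [← Finset.mul_sum]
      _ = ∑ z, |μ z - ν z| := by simp only [hG1, mul_one]
  linarith

lemma tv_pow_le (G : Matrix S S ℝ) (π : S → ℝ) (hG0 : ∀ x y, 0 ≤ G x y)
    (hG1 : ∀ x, ∑ y, G x y = 1) (hπG : ∀ y, ∑ x, π x * G x y = π y) (x : S) :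
    ∀ k, 1 ≤ k → tv ((G ^ k) x) π ≤ tv (G x) π := by
  intro k
  induction k with
  | zero => intro h; exact absurd h (by norm_num)
  | succ k ih =>
    intro _
    rcases Nat.eq_zero_or_pos k with hk | hk
    · subst hk; simp [pow_one]
    have step : tv ((G ^ (k+1)) x) π ≤ tv ((G ^ k) x) π := by
      have hc := tv_contract G hG0 hG1 ((G ^ k) x) π
      have e1 : (fun y => ∑ z, (G ^ k) x z * G z y) = (G ^ (k+1)) x := by
        funext y; rw [pow_succ, Matrix.mul_apply]
      have e2 : (fun y => ∑ z, π z * G z y) = π := funext fun y => hπG y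
      rw [e1, e2] at hc
      exact hc
    exact step.trans (ih hk)

end MatrixLemmas

/-- for a finite irreducible Markov chain,
`d_G(t) = max_x ‖ℙ_x(X_{Z_t} ∈ ·) − π‖` is non-increasing in `t`, where `Z_t` is a
geometric time of mean `t` independent of the chain. -/
theorem claim_dG_mono {S : Type*} [Fintype S] [DecidableEq S] [Nonempty S]
    (P : Matrix S S ℝ) (π : S → ℝ)
    (hP0 : ∀ x y, 0 ≤ P x y) (hP1 : ∀ x, ∑ y, P x y = 1)
    (hirr : ∀ x y, ∃ n, 0 < (P ^ n) x y)
    (hπ0 : ∀ x, 0 ≤ π x) (hπ1 : ∑ x, π x = 1)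
    (hπP : ∀ y, ∑ x, π x * P x y = π y)
    (t : ℕ) (ht : 1 ≤ t) :
    (⨆ x, tv (lawAt P (geo (t + 1)) x) π) ≤ ⨆ x, tv (lawAt P (geo t) x) π := by
  classical
  -- scalar setup
  have hT : (1:ℝ) ≤ (t:ℝ) := by exact_mod_cast ht
  set p : ℝ := 1/(t:ℝ) with hpdef
  set p' : ℝ := 1/((t:ℝ)+1) with hp'def
  set s' : ℝ := 1 - p' with hs'def
  have hp0 : 0 < p := by rw [hpdef]; positivity
  have hp1 : p ≤ 1 := by rw [hpdef, div_le_one (by linarith)]; linarith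
  have hp'0 : 0 < p' := by rw [hp'def]; positivity
  have hp'1 : p' ≤ 1 := by rw [hp'def, div_le_one (by linarith)]; linarith
  have hp'lt : p' < 1 := by rw [hp'def, div_lt_one (by linarith)]; linarith
  have hs'0 : 0 < s' := by rw [hs'def]; linarith
  have hs'1 : s' ≤ 1 := by rw [hs'def]; linarith
  -- matrices
  have hPn : ‖P‖ ≤ 1 := stoch_norm_le_one hP0 hP1
  set G : Matrix S S ℝ := ∑' n, coef p n • P^n with hGdef
  set B : Matrix S S ℝ := ∑' n, coef p' n • P^n with hBdef
  have hGnorm : ‖G‖ ≤ 1 := norm_gser_le_one hp0 hp1 hPn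
  set A : Matrix S S ℝ := ∑' k, coef s' k • G^k with hAdef
  have hGeq : G = p • P + ((1-p) • P) * G := gser_fixed hp0 hp1 hPn
  have hBeq : B = p' • P + ((1-p') • P) * B := gser_fixed hp'0 hp'1 hPn
  have hAeq : A = s' • G + ((1-s') • G) * A := gser_fixed hs'0 hs'1 hGnorm
  -- B satisfies the G-equation
  have hCG : ((1-p) • P) * G = G - p • P := eq_sub_of_add_eq' hGeq.symm
  have hCGB : ((1-p) • P) * (G*B) = G*B - p • (P*B) := by
    rw [← mul_assoc, hCG, sub_mul, smul_mul_assoc]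
  have hL : B - ((1-p) • P) * B = p' • P + (p'*p) • (P*B) := by
    have hco : (p'*p : ℝ) = (1-p') - (1-p) := by
      rw [hpdef, hp'def]; field_simp; ring
    rw [smul_mul_assoc]
    nth_rewrite 1 [hBeq]
    rw [smul_mul_assoc, hco]
    module
  have hR : (s' • G + (1-s') • (G*B)) - ((1-p) • P) * (s' • G + (1-s') • (G*B))
      = p' • P + (p'*p) • (P*B) := by
    have h1 : (s' * p : ℝ) = p' := by
      rw [hs'def, hpdef, hp'def]; field_simp; ring
    have h2 : ((1-s') * p : ℝ) = p' * p := by rw [hs'def]; ring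
    have hCY : ((1-p) • P) * (s' • G + (1-s') • (G*B))
        = s' • (G - p • P) + (1-s') • (G*B - p • (P*B)) := by
      rw [mul_add, mul_smul_comm, mul_smul_comm, hCG, hCGB]
    rw [hCY, ← h2, ← h1]
    module
  have hCnorm : ‖(1-p) • P‖ < 1 := by
    rw [norm_smul, Real.norm_eq_abs, abs_of_nonneg (by linarith : (0:ℝ) ≤ 1-p)]
    nlinarith [norm_nonneg P]
  have hB2 : B = s' • G + (1-s') • (G*B) := by
    refine fixed_unique (C := (1-p) • P) (D := p' • P + (p'*p) • (P*B)) hCnorm ?_ ?_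
    · rw [← hL]; abel
    · rw [← hR]; abel
  have hC2norm : ‖(1-s') • G‖ < 1 := by
    rw [norm_smul, Real.norm_eq_abs, abs_of_nonneg (by linarith : (0:ℝ) ≤ 1-s')]
    nlinarith [norm_nonneg G]
  have hAB : A = B := by
    refine fixed_unique (C := (1-s') • G) (D := s' • G) hC2norm hAeq ?_
    rw [smul_mul_assoc]; exact hB2
  -- entrywise identities
  have hsump := summable_coef_smul hp0 hp1 hPn (p := p)
  have hsump' := summable_coef_smul hp'0 hp'1 hPn (p := p')
  have hsumA := summable_coef_smul hs'0 hs'1 hGnorm (p := s')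
  have hGentry : ∀ x y, G x y = ∑' n, coef p n * (P^n) x y := by
    intro x y
    rw [hGdef, entry_tsum hsump]
    exact tsum_congr fun n => rfl
  have hBentry : ∀ x y, B x y = ∑' n, coef p' n * (P^n) x y := by
    intro x y
    rw [hBdef, entry_tsum hsump']
    exact tsum_congr fun n => rfl
  have hAentry : ∀ x y, A x y = ∑' k, coef s' k * ((G^k)) x y := by
    intro x y
    rw [hAdef, entry_tsum hsumA]
    exact tsum_congr fun n => rfl
  -- geo identification
  have hgeo1 : geo t = coef p := by
    funext n
    cases n with
    | zero => simp [geo, coef]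
    | succ m => simp [geo, coef, hpdef]
  have hgeo2 : geo (t+1) = coef p' := by
    funext n
    cases n with
    | zero => simp [geo, coef]
    | succ m =>
      simp only [geo, coef, hp'def, Nat.succ_ne_zero, if_false, Nat.add_sub_cancel]
      push_cast
      ring
  have hlaw1 : ∀ x, lawAt P (geo t) x = G x := by
    intro x; funext y
    show ∑' n, geo t n * (P^n) x y = G x y
    rw [hgeo1, hGentry]
  have hlaw2 : ∀ x, lawAt P (geo (t+1)) x = A x := by
    intro x; funext y
    show ∑' n, geo (t+1) n * (P^n) x y = A x y
    rw [hgeo2, hAB, hBentry]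
  -- stochastic properties of G
  have hesum : ∀ x y, Summable (fun n => coef p n * (P^n) x y) := by
    intro x y
    refine Summable.of_norm_bounded (summable_coef hp0 hp1) (fun n => ?_)
    rw [Real.norm_eq_abs, abs_mul, abs_of_nonneg (coef_nonneg hp0 hp1 n),
      abs_of_nonneg (pow_nonneg_entries hP0 n x y)]
    nlinarith [pow_entry_le_one hP0 hP1 n x y, coef_nonneg hp0 hp1 n,
      pow_nonneg_entries hP0 n x y]
  have hG0 : ∀ x y, 0 ≤ G x y := by
    intro x y
    rw [hGentry]
    exact tsum_nonneg fun n =>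
      mul_nonneg (coef_nonneg hp0 hp1 n) (pow_nonneg_entries hP0 n x y)
  have hG1 : ∀ x, ∑ y, G x y = 1 := by
    intro x
    calc ∑ y, G x y = ∑ y, ∑' n, coef p n * (P^n) x y := by
          apply Finset.sum_congr rfl; intro y _; rw [hGentry]
      _ = ∑' n, ∑ y, coef p n * (P^n) x y := (Summable.tsum_finsetSum fun y _ => hesum x y).symm
      _ = ∑' n, coef p n := by
          refine tsum_congr fun n => ?_
          rw [← Finset.mul_sum, pow_row_sum hP1 n x, mul_one]
      _ = 1 := tsum_coef hp0 hp1
  have hπG : ∀ y, ∑ x', π x' * G x' y = π y := by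
    intro y
    calc ∑ x', π x' * G x' y = ∑ x', ∑' n, π x' * (coef p n * (P^n) x' y) := by
          apply Finset.sum_congr rfl; intro x' _
          rw [hGentry, tsum_mul_left]
      _ = ∑' n, ∑ x', π x' * (coef p n * (P^n) x' y) :=
          (Summable.tsum_finsetSum fun x' _ => (hesum x' y).mul_left (π x')).symm
      _ = ∑' n, coef p n * π y := by
          refine tsum_congr fun n => ?_
          calc ∑ x', π x' * (coef p n * (P^n) x' y)
              = coef p n * ∑ x', π x' * (P^n) x' y := by
                rw [Finset.mul_sum]; apply Finset.sum_congr rfl; intro x' _; ring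
            _ = coef p n * π y := by rw [pow_pi_inv hπP n y]
      _ = π y := by rw [tsum_mul_right, tsum_coef hp0 hp1, one_mul]
  -- final bound
  set Mx := ⨆ x, tv (lawAt P (geo t) x) π with hMdef
  have hMge : ∀ x, tv (G x) π ≤ Mx := by
    intro x
    rw [← hlaw1, hMdef]
    exact le_ciSup (f := fun x => tv (lawAt P (geo t) x) π) (Finite.bddAbove_range _) x
  apply ciSup_le
  intro x
  rw [hlaw2]
  have hπle : ∀ y, π y ≤ 1 := by
    intro y
    have : π y ≤ ∑ z, π z :=
      Finset.single_le_sum (f := fun z => π z) (fun z _ => hπ0 z) (Finset.mem_univ y)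
    linarith [hπ1 ▸ this]
  have habs2 : ∀ k y, |(G^k) x y - π y| ≤ 2 := by
    intro k y
    have h1 : 0 ≤ (G^k) x y := pow_nonneg_entries hG0 k x y
    have h2 : (G^k) x y ≤ 1 := pow_entry_le_one hG0 hG1 k x y
    have h3 := hπ0 y
    have h4 := hπle y
    rw [abs_le]; constructor <;> linarith
  have habsum : ∀ y, Summable (fun k => coef s' k * |(G^k) x y - π y|) := by
    intro y
    refine Summable.of_norm_bounded ((summable_coef hs'0 hs'1).mul_right 2) (fun k => ?_)
    rw [Real.norm_eq_abs, abs_mul, abs_of_nonneg (coef_nonneg hs'0 hs'1 k), abs_abs]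
    exact mul_le_mul_of_nonneg_left (habs2 k y) (coef_nonneg hs'0 hs'1 k)
  have hGksum : ∀ y, Summable (fun k => coef s' k * (G^k) x y) := by
    intro y
    refine Summable.of_norm_bounded (summable_coef hs'0 hs'1) (fun k => ?_)
    rw [Real.norm_eq_abs, abs_mul, abs_of_nonneg (coef_nonneg hs'0 hs'1 k),
      abs_of_nonneg (pow_nonneg_entries hG0 k x y)]
    nlinarith [pow_entry_le_one hG0 hG1 k x y, coef_nonneg hs'0 hs'1 k,
      pow_nonneg_entries hG0 k x y]
  have hdiff : ∀ y, A x y - π y = ∑' k, coef s' k * ((G^k) x y - π y) := by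
    intro y
    have h1 : π y = ∑' k, coef s' k * π y := by
      rw [tsum_mul_right, tsum_coef hs'0 hs'1, one_mul]
    calc A x y - π y = (∑' k, coef s' k * (G^k) x y) - ∑' k, coef s' k * π y := by
          rw [hAentry x y]
          conv_lhs => rw [h1]
      _ = ∑' k, (coef s' k * (G^k) x y - coef s' k * π y) :=
          (Summable.tsum_sub (hGksum y) ((summable_coef hs'0 hs'1).mul_right (π y))).symm
      _ = ∑' k, coef s' k * ((G^k) x y - π y) := tsum_congr fun k => by ring
  have hbound : ∀ y, |A x y - π y| ≤ ∑' k, coef s' k * |(G^k) x y - π y| := by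
    intro y
    rw [hdiff y]
    calc |∑' k, coef s' k * ((G^k) x y - π y)|
        ≤ ∑' k, ‖coef s' k * ((G^k) x y - π y)‖ := by
          rw [← Real.norm_eq_abs]
          apply norm_tsum_le_tsum_norm
          refine Summable.of_nonneg_of_le (fun _ => norm_nonneg _) (fun k => ?_)
            (habsum y)
          rw [Real.norm_eq_abs, abs_mul, abs_of_nonneg (coef_nonneg hs'0 hs'1 k)]
      _ = ∑' k, coef s' k * |(G^k) x y - π y| := tsum_congr fun k => by
          rw [Real.norm_eq_abs, abs_mul, abs_of_nonneg (coef_nonneg hs'0 hs'1 k)]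
  show tv (A x) π ≤ Mx
  unfold tv
  have h2tv : ∀ k, ∑ y, coef s' k * |(G^k) x y - π y| = coef s' k * (2 * tv ((G^k) x) π) := by
    intro k
    rw [← Finset.mul_sum]
    unfold tv
    ring
  have hle : ∀ k, coef s' k * (2 * tv ((G^k) x) π) ≤ coef s' k * (2 * Mx) := by
    intro k
    rcases Nat.eq_zero_or_pos k with hk | hk
    · subst hk; simp [coef_zero]
    · have h1 : tv ((G^k) x) π ≤ tv (G x) π := tv_pow_le G π hG0 hG1 hπG x k hk
      have h2 := hMge x
      have h3 := coef_nonneg hs'0 hs'1 k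
      nlinarith
  have hsl : Summable (fun k => coef s' k * (2 * tv ((G^k) x) π)) := by
    refine Summable.of_nonneg_of_le
      (fun k => mul_nonneg (coef_nonneg hs'0 hs'1 k)
        (mul_nonneg (by norm_num) tv_nonneg)) hle
      ((summable_coef hs'0 hs'1).mul_right (2 * Mx))
  calc (1/2) * ∑ y, |A x y - π y|
      ≤ (1/2) * ∑ y, ∑' k, coef s' k * |(G^k) x y - π y| := by
        exact mul_le_mul_of_nonneg_left (Finset.sum_le_sum fun y _ => hbound y)
          (by norm_num)
    _ = (1/2) * ∑' k, ∑ y, coef s' k * |(G^k) x y - π y| := by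
        congr 1
        exact (Summable.tsum_finsetSum fun y _ => habsum y).symm
    _ = (1/2) * ∑' k, coef s' k * (2 * tv ((G^k) x) π) := by
        congr 1
        exact tsum_congr fun k => h2tv k
    _ ≤ (1/2) * ∑' k, coef s' k * (2 * Mx) := by
        have := Summable.tsum_le_tsum hle hsl ((summable_coef hs'0 hs'1).mul_right (2 * Mx))
        linarith
    _ = Mx := by rw [tsum_mul_right, tsum_coef hs'0 hs'1, one_mul]; ring
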